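/- If D is an interval domain and x ≪ p in D with p maximal, then left(x) ≪ p and p ≪ right(x) in the poset (max(D), ≤). -/
import Mathlib


open Set

/-- `a` is way below `x`. -/
def wayBelow {α : Type*} [Preorder α] (a x : α) : Prop :=
  ∀ S : Set α, S.Nonempty → DirectedOn (· ≤ ·) S → ∀ d, IsLUB S d → x ≤ d →
    ∃ s ∈ S, a ≤ s

/-- A poset is continuous if every element is the supremum of a directed set
of elements way below it. -/
def ContinuousPoset (α : Type*) [Preorder α] : Prop :=
  ∀ x : α, ∃ S : Set α, S ⊆ {a | wayBelow a x} ∧ S.Nonempty ∧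
    DirectedOn (· ≤ ·) S ∧ IsLUB S x

/-- A basis for a continuous poset. -/
def PosetBasis {α : Type*} [Preorder α] (B : Set α) : Prop :=
  ∀ x : α, ∃ S : Set α, S ⊆ B ∩ {a | wayBelow a x} ∧ S.Nonempty ∧
    DirectedOn (· ≤ ·) S ∧ IsLUB S x

/-- Scott open sets: upper sets inaccessible by directed suprema. -/
def ScottOpen {α : Type*} [Preorder α] (U : Set α) : Prop :=
  IsUpperSet U ∧ ∀ S : Set α, S.Nonempty → DirectedOn (· ≤ ·) S → ∀ d, IsLUB S d →
    d ∈ U → (S ∩ U).Nonempty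

/-- The Scott topology. -/
def scottTop (α : Type*) [Preorder α] : TopologicalSpace α :=
  TopologicalSpace.generateFrom {U | ScottOpen U}

/-- A bicontinuous poset. -/
def Bicontinuous (α : Type*) [Preorder α] : Prop :=
  ContinuousPoset α ∧
  (∀ x y : α, wayBelow x y ↔
    ∀ S : Set α, S.Nonempty → DirectedOn (· ≥ ·) S → ∀ i, IsGLB S i → i ≤ x →
      ∃ s ∈ S, s ≤ y) ∧
  (∀ x : α, DirectedOn (· ≥ ·) {y | wayBelow x y} ∧ IsGLB {y | wayBelow x y} x)

/-- The basic open intervals `(a,b) = {x | a ≪ x ≪ b}`. -/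
def intervalBasis (α : Type*) [Preorder α] : Set (Set α) :=
  {s | ∃ a b : α, s = {x | wayBelow a x ∧ wayBelow x b}}

/-- The interval topology, generated by the sets `(a,b)`. -/
def intervalTop (α : Type*) [Preorder α] : TopologicalSpace α :=
  TopologicalSpace.generateFrom (intervalBasis α)

/-- A globally hyperbolic poset: bicontinuous, with compact closed intervals. -/
def GloballyHyperbolic (α : Type*) [PartialOrder α] : Prop :=
  Bicontinuous α ∧ ∀ a b : α, @IsCompact α (intervalTop α) (Set.Icc a b)

/-- The poset of closed intervals `[a,b]`, `a ≤ b`, under reverse inclusion. -/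
def IX (α : Type*) [PartialOrder α] := {p : α × α // p.1 ≤ p.2}

instance IX.instPartialOrder {α : Type*} [PartialOrder α] : PartialOrder (IX α) where
  le x y := x.1.1 ≤ y.1.1 ∧ y.1.2 ≤ x.1.2
  le_refl x := ⟨le_refl _, le_refl _⟩
  le_trans x y z h1 h2 := ⟨h1.1.trans h2.1, h2.2.trans h1.2⟩
  le_antisymm x y h1 h2 :=
    Subtype.ext (Prod.ext_iff.mpr ⟨le_antisymm h1.1 h2.1, le_antisymm h2.2 h1.2⟩)

section Rel

variable {β : Type*}

/-- Directedness with respect to an arbitrary relation. -/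
def relDirectedOn (r : β → β → Prop) (S : Set β) : Prop :=
  ∀ x ∈ S, ∀ y ∈ S, ∃ z ∈ S, r x z ∧ r y z

/-- Least upper bound with respect to an arbitrary relation. -/
def relIsLUB (r : β → β → Prop) (S : Set β) (d : β) : Prop :=
  (∀ s ∈ S, r s d) ∧ ∀ u, (∀ s ∈ S, r s u) → r d u

/-- The way-below relation with respect to an arbitrary relation. -/
def relWayBelow (r : β → β → Prop) (a x : β) : Prop :=
  ∀ S : Set β, S.Nonempty → relDirectedOn r S → ∀ d, relIsLUB r S d → r x d →
    ∃ s ∈ S, r a s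

/-- An abstract basis: a transitive relation, interpolative from the `-` direction. -/
def AbstractBasis (r : β → β → Prop) : Prop :=
  Transitive r ∧ ∀ (F : Finset β) (x : β), (∀ y ∈ F, r y x) →
    ∃ z, (∀ y ∈ F, r y z) ∧ r z x

/-- Interpolation in the `+` direction. -/
def PlusInterpolative (r : β → β → Prop) : Prop :=
  ∀ (F : Finset β) (x : β), (∀ y ∈ F, r x y) → ∃ z, r x z ∧ (∀ y ∈ F, r z y)

/-- An ideal: a nonempty directed lower set. -/
def IsIdeal (r : β → β → Prop) (I : Set β) : Prop :=
  I.Nonempty ∧ (∀ x y, r x y → y ∈ I → x ∈ I) ∧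
    ∀ x ∈ I, ∀ y ∈ I, ∃ z ∈ I, r x z ∧ r y z

/-- The ideal completion: ideals ordered by inclusion. -/
def IdealCompletion (r : β → β → Prop) := {I : Set β // IsIdeal r I}

instance IdealCompletion.instPartialOrder {β : Type*} (r : β → β → Prop) :
    PartialOrder (IdealCompletion r) where
  le I J := I.1 ⊆ J.1
  le_refl I := subset_rfl
  le_trans I J K h1 h2 := Set.Subset.trans h1 h2
  le_antisymm I J h1 h2 := Subtype.ext (Set.Subset.antisymm h1 h2)

end Rel

/-- The order on maximal elements induced by interval endpoints. -/
def maxLe {α : Type*} (left right : α → α) (a b : α) : Prop :=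
  ∃ x, left x = a ∧ right x = b

/-- An interval poset. -/
structure IntervalPoset (α : Type*) [PartialOrder α] where
  left : α → α
  right : α → α
  left_max : ∀ x, IsMax (left x)
  right_max : ∀ x, IsMax (right x)
  glb : ∀ x, IsGLB {left x, right x} x
  glue : ∀ x y, right x = left y →
    ∃ z, IsGLB {x, y} z ∧ left z = left x ∧ right z = right y
  sub_left : ∀ x p, IsMax p → x ≤ p →
    ∃ z, IsGLB {left x, p} z ∧ left z = left x ∧ right z = p
  sub_right : ∀ x p, IsMax p → x ≤ p →
    ∃ z, IsGLB {p, right x} z ∧ left z = p ∧ right z = right x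

/-- An interval domain. -/
structure IntervalDomain (α : Type*) [PartialOrder α] extends IntervalPoset α where
  dcpo : ∀ S : Set α, S.Nonempty → DirectedOn (· ≤ ·) S → ∃ d, IsLUB S d
  cont : ContinuousPoset α
  ax1 : ∀ x p, IsMax p → wayBelow x p →
    (∀ z, IsGLB {left x, p} z → ∃ u, wayBelow z u) ∧
    (∀ z, IsGLB {p, right x} z → ∃ u, wayBelow z u)
  ax2b : ∀ x : α, (∃ u, wayBelow x u) ↔
    (∀ y, left y = left x → y ≤ x →
      relWayBelow (fun u v => u ≤ v ∧ right u = right y ∧ right v = right y) y (right y))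
  ax2c : ∀ x : α, (∃ u, wayBelow x u) ↔
    (∀ y, right y = right x → y ≤ x →
      relWayBelow (fun u v => u ≤ v ∧ left u = left y ∧ left v = left y) y (left y))
  ax3a : ∀ (p : α) (S : Set α), S.Nonempty → S ⊆ {z | left z = p} →
    DirectedOn (· ≤ ·) S → ∀ u, IsLUB S u →
      left u = p ∧ ∀ (q : α) (T : Set α), T.Nonempty → T ⊆ {z | left z = q} →
        DirectedOn (· ≤ ·) T → ∀ v, IsLUB T v → right '' T = right '' S →
          right u = right v
  ax3b : ∀ (q : α) (S : Set α), S.Nonempty → S ⊆ {z | right z = q} →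
    DirectedOn (· ≤ ·) S → ∀ u, IsLUB S u →
      right u = q ∧ ∀ (p : α) (T : Set α), T.Nonempty → T ⊆ {z | right z = p} →
        DirectedOn (· ≤ ·) T → ∀ v, IsLUB T v → left '' T = left '' S →
          left u = left v
  ax4 : ∀ x : α, @IsCompact α (scottTop α) ({y | x ≤ y} ∩ {y | IsMax y})

section Helpers

variable {α : Type*} [PartialOrder α]

lemma wayBelow_le {x p : α} (h : wayBelow x p) : x ≤ p := by
  obtain ⟨s, hs, hxs⟩ := h {p} ⟨p, rfl⟩
    (fun a _ b _ => ⟨p, rfl, by simp_all, by simp_all⟩) p isLUB_singleton le_rfl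
  rw [Set.mem_singleton_iff] at hs
  exact hs ▸ hxs

variable (D : IntervalDomain α)

lemma ID.le_left (x : α) : x ≤ D.left x := (D.glb x).1 (Set.mem_insert _ _)

lemma ID.le_right (x : α) : x ≤ D.right x :=
  (D.glb x).1 (Set.mem_insert_of_mem _ rfl)

lemma ID.ext {x y : α} (hl : D.left x = D.left y) (hr : D.right x = D.right y) :
    x = y := by
  have h1 := D.glb x
  rw [hl, hr] at h1
  exact h1.unique (D.glb y)

lemma ID.left_eq {a : α} (h : IsMax a) : D.left a = a :=
  le_antisymm (h (ID.le_left D a)) (ID.le_left D a)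

lemma ID.right_eq {a : α} (h : IsMax a) : D.right a = a :=
  le_antisymm (h (ID.le_right D a)) (ID.le_right D a)

lemma ID.maxLe_antisymm {a b : α} (h1 : maxLe D.left D.right a b)
    (h2 : maxLe D.left D.right b a) : a = b := by
  obtain ⟨w, hwl, hwr⟩ := h1
  obtain ⟨w', hw'l, hw'r⟩ := h2
  have ha : IsMax a := hwl ▸ D.left_max w
  obtain ⟨g, hg, hgl, hgr⟩ := D.glue w w' (hwr.trans hw'l.symm)
  have hga : g = a := ID.ext D (by rw [hgl, hwl, ID.left_eq D ha])
    (by rw [hgr, hw'r, ID.right_eq D ha])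
  have hab : a ≤ b := by
    calc a = g := hga.symm
    _ ≤ w := hg.1 (Set.mem_insert _ _)
    _ ≤ D.right w := ID.le_right D w
    _ = b := hwr
  exact le_antisymm hab (ha hab)

/-- Key lemma: if `g` lies in the fibre of intervals with right endpoint `d`,
`d` is the `maxLe`-lub of a `maxLe`-directed set `S`, and `g` is way below `d`
inside that fibre, then some `s ∈ S` satisfies `left g ≤ s` in `max D`. -/
lemma ID.key (S : Set α) (hS : S.Nonempty)
    (hdir : relDirectedOn (maxLe D.left D.right) S) (d : α)
    (hlub : relIsLUB (maxLe D.left D.right) S d)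
    (g : α) (hgd : D.right g = d)
    (hwb : relWayBelow
      (fun u v => u ≤ v ∧ D.right u = D.right g ∧ D.right v = D.right g)
      g (D.right g)) :
    ∃ s ∈ S, maxLe D.left D.right (D.left g) s := by
  rw [hgd] at hwb
  obtain ⟨s0, hs0⟩ := hS
  obtain ⟨w0, hw0l, hw0r⟩ := hlub.1 s0 hs0
  have hd : IsMax d := hw0r ▸ D.right_max w0
  have hrd : D.right d = d := ID.right_eq D hd
  -- the set of intervals `[s, d]`, `s ∈ S`
  let T : Set α := {w : α | D.left w ∈ S ∧ D.right w = d}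
  have hw0T : w0 ∈ T := ⟨hw0l ▸ hs0, hw0r⟩
  have hTne : T.Nonempty := ⟨w0, hw0T⟩
  have hTdir : relDirectedOn
      (fun u v => u ≤ v ∧ D.right u = d ∧ D.right v = d) T := by
    rintro w1 ⟨hw1S, hw1r⟩ w2 ⟨hw2S, hw2r⟩
    obtain ⟨s3, hs3, h13, h23⟩ := hdir _ hw1S _ hw2S
    obtain ⟨w3, hw3l, hw3r⟩ := hlub.1 s3 hs3
    have step : ∀ w, D.right w = d → maxLe D.left D.right (D.left w) s3 →
        w ≤ w3 ∧ D.right w = d ∧ D.right w3 = d := by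
      rintro w hwr ⟨a, hal, har⟩
      obtain ⟨g1, hg1, hg1l, hg1r⟩ := D.glue a w3 (har.trans hw3l.symm)
      have hg1w : g1 = w := ID.ext D (by rw [hg1l, hal]) (by rw [hg1r, hw3r, hwr])
      exact ⟨hg1w ▸ hg1.1 (Set.mem_insert_of_mem _ rfl), hwr, hw3r⟩
    exact ⟨w3, ⟨hw3l ▸ hs3, hw3r⟩, step w1 hw1r h13, step w2 hw2r h23⟩
  have hTdirD : DirectedOn (· ≤ ·) T := by
    intro a ha b hb
    obtain ⟨c, hc, h1, h2⟩ := hTdir a ha b hb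
    exact ⟨c, hc, h1.1, h2.1⟩
  obtain ⟨u, hu⟩ := D.dcpo T hTne hTdirD
  have hur : D.right u = d := (D.ax3b d T hTne (fun w hw => hw.2) hTdirD u hu).1
  -- `left u = d`, hence `u = d`
  have hub : ∀ s ∈ S, maxLe D.left D.right s (D.left u) := by
    intro s hs
    obtain ⟨w, hwl, hwr⟩ := hlub.1 s hs
    have hwu : w ≤ D.left u := (hu.1 (⟨hwl ▸ hs, hwr⟩ : w ∈ T)).trans (ID.le_left D u)
    obtain ⟨z, _, hzl, hzr⟩ := D.sub_left w (D.left u) (D.left_max u) hwu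
    exact ⟨z, by rw [hzl, hwl], hzr⟩
  have h1 : maxLe D.left D.right d (D.left u) := hlub.2 _ hub
  have h2 : maxLe D.left D.right (D.left u) d := by
    obtain ⟨z, _, hzl, hzr⟩ := D.sub_left u d hd (hur ▸ ID.le_right D u)
    exact ⟨z, hzl, hzr⟩
  have hul : D.left u = d := ID.maxLe_antisymm D h2 h1
  have hud : u = d := ID.ext D (by rw [hul, ID.left_eq D hd]) (by rw [hur, hrd])
  have hTlub : relIsLUB (fun u v => u ≤ v ∧ D.right u = d ∧ D.right v = d) T d := by
    constructor
    · intro w hw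
      exact ⟨hud ▸ hu.1 hw, hw.2, hrd⟩
    · intro u' hu'
      exact ⟨hud ▸ hu.2 (fun w hw => (hu' w hw).1), hrd, (hu' w0 hw0T).2.2⟩
  obtain ⟨w, hwT, hgw⟩ := hwb T hTne hTdir d hTlub ⟨le_rfl, hrd, hrd⟩
  obtain ⟨z, _, hzl, hzr⟩ := D.sub_left g (D.left w) (D.left_max w)
    (hgw.1.trans (ID.le_left D w))
  exact ⟨D.left w, hwT.1, ⟨z, hzl, hzr⟩⟩

end Helpers

/-- in an interval domain, `x ≪ p` with `p` maximal implies
`left x ≪ p` and `p ≪ right x` in `(max D, ≤)`. -/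
theorem wayBelow_endpoints {α : Type*} [PartialOrder α] (D : IntervalDomain α)
    (x p : α) (hp : IsMax p) (hxp : wayBelow x p) :
    relWayBelow (maxLe D.left D.right) (D.left x) p ∧
    relWayBelow (maxLe D.left D.right) p (D.right x) := by
  have hxlep : x ≤ p := wayBelow_le hxp
  obtain ⟨z1, hz1, h1l, h1r⟩ := D.sub_left x p hp hxlep
  obtain ⟨z2, hz2, h2l, h2r⟩ := D.sub_right x p hp hxlep
  have fib1 := (D.ax2b z1).mp ((D.ax1 x p hp hxp).1 z1 hz1)
  have fib2 := (D.ax2b z2).mp ((D.ax1 x p hp hxp).2 z2 hz2)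
  constructor
  · intro S hSne hSdir d hlub hpd
    obtain ⟨v, hvl, hvr⟩ := hpd
    obtain ⟨g, hg, hgl, hgr⟩ := D.glue z1 v (h1r.trans hvl.symm)
    have hwb := fib1 g hgl (hg.1 (Set.mem_insert _ _))
    have := ID.key D S hSne hSdir d hlub g (hgr.trans hvr) hwb
    rwa [hgl, h1l] at this
  · intro S hSne hSdir d hlub hrd
    obtain ⟨v, hvl, hvr⟩ := hrd
    obtain ⟨g, hg, hgl, hgr⟩ := D.glue z2 v (h2r.trans hvl.symm)
    have hwb := fib2 g hgl (hg.1 (Set.mem_insert _ _))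
    have := ID.key D S hSne hSdir d hlub g (hgr.trans hvr) hwb
    rwa [hgl, h2l] at this
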